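/- There exists a constant C, depending only on ρ₀, such that for all integers m ≥ 0, k ≥ 0 and all integers i ≥ 1, j ≥ 0 with j ≤ m, i ≤ k+1 and 1 ≤ i+j ≤ ⌊(m+k+1)/2⌋, one has binom(m,j)·binom(k+1,i)·(m+k+1)^{−1/2}·(m+1)·H_{ρ,m+1,k}/(H_{ρ,j+4,i−1}·H_{ρ,m−j+1,k+1−i}) ≤ C·(j+4)·(m−j+1)·(i+j+1)^{−2}·(m+k−i−j+2)^{1/2}. -/

import Mathlib

set_option maxHeartbeats 1000000


open MeasureTheory Real Filter

noncomputable section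

namespace HypP

/-- Japanese bracket `⟨y⟩ = (1+y²)^{1/2}`. -/
def br (y : ℝ) : ℝ := Real.sqrt (1 + y ^ 2)

/-- Weighting a function of `(x,y)` by `⟨y⟩^e`. -/
def wt (e : ℝ) (g : ℝ → ℝ → ℝ) : ℝ → ℝ → ℝ := fun x y => br y ^ e * g x y

/-- `m`-th tangential derivative `∂ₓ^m`. -/
def Dx (m : ℕ) (g : ℝ → ℝ → ℝ) : ℝ → ℝ → ℝ :=
  fun x y => iteratedDeriv m (fun x' => g x' y) x

/-- `k`-th normal derivative `∂_y^k`. -/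
def Dy (k : ℕ) (g : ℝ → ℝ → ℝ) : ℝ → ℝ → ℝ :=
  fun x y => iteratedDeriv k (fun y' => g x y') y

/-- Squared `L²` norm on the half-plane `ℝ × (0,∞)`. -/
def sqL2 (g : ℝ → ℝ → ℝ) : ℝ := ∫ x : ℝ, ∫ y in Set.Ioi (0 : ℝ), (g x y) ^ 2

/-- `L²` inner product on the half-plane. -/
def ipL2 (f g : ℝ → ℝ → ℝ) : ℝ := ∫ x : ℝ, ∫ y in Set.Ioi (0 : ℝ), f x y * g x y

/-- Squared `L²ₓL^∞_y` norm on the half-plane. -/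
def sqL2xLinfy (g : ℝ → ℝ → ℝ) : ℝ :=
  ∫ x : ℝ, (sSup ((fun y => |g x y|) '' Set.Ioi (0 : ℝ))) ^ 2

/-- The weight `H_{ρ,m,k}`. -/
def Hc (ρ : ℝ) (m k : ℕ) : ℝ :=
  ρ ^ (m + k + 1) * ((m : ℝ) + (k : ℝ) + 1) ^ 9 /
    (((m + k).factorial : ℝ) * Real.sqrt (m.factorial : ℝ))

/-- The weight `N_{ρ,m} = H_{ρ,m,0}`. -/
def Nc (ρ : ℝ) (m : ℕ) : ℝ := Hc ρ m 0

/-- The weight `L_{ρ,k} = H_{ρ,1,k}`. -/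
def Lc (ρ : ℝ) (k : ℕ) : ℝ := Hc ρ 1 k

/-- Squared anisotropic Gevrey norm `‖h‖²_{G^{3/2,1}_{ρ,ℓ}}`. -/
def gevSq (ρ ℓ : ℝ) (h : ℝ → ℝ → ℝ) : ℝ :=
  (∑' m : ℕ, (Nc ρ m * Real.sqrt (sqL2 (wt (ℓ - 1) (Dx m h)))) ^ 2)
  + ∑' m : ℕ, ∑' k : ℕ,
      (((m : ℝ) + 1) * Hc ρ (m + 1) k *
        Real.sqrt (sqL2 (wt ℓ (Dx m (Dy (k + 1) h))))) ^ 2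

/-- Anisotropic Gevrey norm. -/
def gevNorm (ρ ℓ : ℝ) (h : ℝ → ℝ → ℝ) : ℝ := Real.sqrt (gevSq ρ ℓ h)

/-- Membership in the anisotropic Gevrey space `G^{3/2,1}_{ρ,ℓ}`. -/
def InGev (ρ ℓ : ℝ) (h : ℝ → ℝ → ℝ) : Prop :=
  Summable (fun m : ℕ => (Nc ρ m * Real.sqrt (sqL2 (wt (ℓ - 1) (Dx m h)))) ^ 2) ∧
  Summable (fun p : ℕ × ℕ =>
    (((p.1 : ℝ) + 1) * Hc ρ (p.1 + 1) p.2 *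
      Real.sqrt (sqL2 (wt ℓ (Dx p.1 (Dy (p.2 + 1) h))))) ^ 2)

/-- Time derivative `∂ₜ`. -/
def pt (u : ℝ → ℝ → ℝ → ℝ) : ℝ → ℝ → ℝ → ℝ := fun t x y => deriv (fun s => u s x y) t

/-- Tangential derivative `∂ₓ` (time-dependent functions). -/
def px (u : ℝ → ℝ → ℝ → ℝ) : ℝ → ℝ → ℝ → ℝ := fun t x y => deriv (fun x' => u t x' y) x

/-- Normal derivative `∂_y` (time-dependent functions). -/
def py (u : ℝ → ℝ → ℝ → ℝ) : ℝ → ℝ → ℝ → ℝ := fun t x y => deriv (fun y' => u t x y') y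

/-- The normal velocity `v(t,x,y) = -∫₀^y ∂ₓu(t,x,ỹ) dỹ`. -/
def vv (u : ℝ → ℝ → ℝ → ℝ) : ℝ → ℝ → ℝ → ℝ :=
  fun t x y => -∫ s in (0 : ℝ)..y, px u t x s

/-- The auxiliary function `φ = ∂ₜu + u∂ₓu + v∂_yu`. -/
def phi (u : ℝ → ℝ → ℝ → ℝ) : ℝ → ℝ → ℝ → ℝ :=
  fun t x y => pt u t x y + u t x y * px u t x y + vv u t x y * py u t x y

/-- `u` solves the 2D hyperbolic Prandtl system on `[0,T]`, with the no-slip boundary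
condition and decay of `u` at `y → ∞`. -/
def Solves (u : ℝ → ℝ → ℝ → ℝ) (T : ℝ) : Prop :=
  (∀ t ∈ Set.Icc (0 : ℝ) T, ∀ x : ℝ, ∀ y ∈ Set.Ioi (0 : ℝ),
      pt (pt u) t x y + pt u t x y
        + u t x y * px u t x y + vv u t x y * py u t x y
        + pt (fun t' x' y' => u t' x' y' * px u t' x' y' + vv u t' x' y' * py u t' x' y') t x y
        - py (py u) t x y = 0)
  ∧ (∀ t ∈ Set.Icc (0 : ℝ) T, ∀ x : ℝ, u t x 0 = 0)
  ∧ (∀ t ∈ Set.Icc (0 : ℝ) T, ∀ x : ℝ, Tendsto (fun y => u t x y) atTop (nhds 0))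

/-- `U` is the auxiliary function `𝒰` solving
`(∂ₜ + u∂ₓ + v∂_y)∫₀^y 𝒰 dỹ = -∂ₓv`, `𝒰|_{t=0} = 0`. -/
def AuxU (u U : ℝ → ℝ → ℝ → ℝ) (T : ℝ) : Prop :=
  (∀ t ∈ Set.Icc (0 : ℝ) T, ∀ x : ℝ, ∀ y ∈ Set.Ioi (0 : ℝ),
      pt (fun t' x' y' => ∫ s in (0 : ℝ)..y', U t' x' s) t x y
        + u t x y * px (fun t' x' y' => ∫ s in (0 : ℝ)..y', U t' x' s) t x y
        + vv u t x y * py (fun t' x' y' => ∫ s in (0 : ℝ)..y', U t' x' s) t x y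
        = -px (vv u) t x y)
  ∧ (∀ x : ℝ, ∀ y : ℝ, U 0 x y = 0)

/-- The auxiliary function `λ = ∂ₓu - (∂_yu)∫₀^y 𝒰 dỹ`. -/
def lam (u U : ℝ → ℝ → ℝ → ℝ) : ℝ → ℝ → ℝ → ℝ :=
  fun t x y => px u t x y - py u t x y * ∫ s in (0 : ℝ)..y, U t x s

/-- `|a|²_{X_ρ}` for a time slice `a = (us, Us, ls, fs)` of `(u, 𝒰, λ, φ)`. -/
def Xsq (ρ ℓ : ℝ) (us Us ls fs : ℝ → ℝ → ℝ) : ℝ :=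
  (∑' m : ℕ, (Nc ρ (m + 1)) ^ 2 * sqL2 (Dx m Us))
  + (∑' m : ℕ, ((m : ℝ) + 1) * (Nc ρ (m + 1)) ^ 2 * sqL2 (wt (ℓ - 1) (Dx m ls)))
  + ∑' m : ℕ, ∑' k : ℕ, ((m : ℝ) + 1) ^ 2 * (Hc ρ (m + 1) k) ^ 2 *
      (sqL2 (wt ℓ (Dx m (Dy k fs))) + sqL2 (wt ℓ (Dx m (Dy (k + 1) us))))

/-- `|a|²_{Y_ρ}` for a time slice `a = (us, Us, ls, fs)` of `(u, 𝒰, λ, φ)`. -/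
def Ysq (ρ ℓ : ℝ) (us Us ls fs : ℝ → ℝ → ℝ) : ℝ :=
  (∑' m : ℕ, ((m : ℝ) + 1) * (Nc ρ (m + 1)) ^ 2 * sqL2 (Dx m Us))
  + (∑' m : ℕ, ((m : ℝ) + 1) ^ 2 * (Nc ρ (m + 1)) ^ 2 * sqL2 (wt (ℓ - 1) (Dx m ls)))
  + ∑' m : ℕ, ∑' k : ℕ, ((m : ℝ) + (k : ℝ) + 1) * ((m : ℝ) + 1) ^ 2 * (Hc ρ (m + 1) k) ^ 2 *
      (sqL2 (wt ℓ (Dx m (Dy k fs))) + sqL2 (wt ℓ (Dx m (Dy (k + 1) us))))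

/-- `|a|_{X_ρ}`. -/
def Xnorm (ρ ℓ : ℝ) (us Us ls fs : ℝ → ℝ → ℝ) : ℝ := Real.sqrt (Xsq ρ ℓ us Us ls fs)

/-- `|a|_{Y_ρ}`. -/
def Ynorm (ρ ℓ : ℝ) (us Us ls fs : ℝ → ℝ → ℝ) : ℝ := Real.sqrt (Ysq ρ ℓ us Us ls fs)

end HypP

open HypP

lemma nat1 (i' j d e : ℕ) :
    (j+d).choose j * ((i'+e+1).choose (i'+1)) * (i'+j+4).factorial * (d+e+1).factorial
      ≤ (i'+j+2)*(i'+j+3)*(i'+j+4)*(d+e+1)*(j+d+i'+e+1).factorial := by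
  have hV : (j+d).choose j * ((i'+e+1).choose (i'+1)) ≤ (j+d+i'+e+1).choose (i'+j+1) := by
    have h := Nat.add_choose_eq (j+d) (i'+e+1) (i'+j+1)
    rw [show j+d+(i'+e+1) = j+d+i'+e+1 by omega] at h
    rw [h]
    exact Finset.single_le_sum (f := fun p : ℕ × ℕ => (j+d).choose p.1 * (i'+e+1).choose p.2)
      (fun _ _ => Nat.zero_le _)
      (by simp only [Finset.HasAntidiagonal.mem_antidiagonal]; omega : (j, i'+1) ∈ Finset.HasAntidiagonal.antidiagonal (i'+j+1))
  have hkey : (j+d+i'+e+1).choose (i'+j+1) * (i'+j+1).factorial * (d+e).factorial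
      = (j+d+i'+e+1).factorial := by
    have h := Nat.choose_mul_factorial_mul_factorial (show i'+j+1 ≤ j+d+i'+e+1 by omega)
    rwa [show j+d+i'+e+1 - (i'+j+1) = d+e by omega] at h
  have e1 : (i'+j+4).factorial = (i'+j+4)*((i'+j+3)*((i'+j+2)*(i'+j+1).factorial)) := by
    rw [show i'+j+4 = (i'+j+1)+1+1+1 by omega]
    simp [Nat.factorial_succ]
  have e2 : (d+e+1).factorial = (d+e+1)*(d+e).factorial := Nat.factorial_succ _
  calc (j+d).choose j * ((i'+e+1).choose (i'+1)) * (i'+j+4).factorial * (d+e+1).factorial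
      = ((j+d).choose j * ((i'+e+1).choose (i'+1)) * ((i'+j+1).factorial * (d+e).factorial))
          * ((i'+j+2)*(i'+j+3)*(i'+j+4)*(d+e+1)) := by rw [e1, e2]; ring
    _ ≤ ((j+d+i'+e+1).choose (i'+j+1) * ((i'+j+1).factorial * (d+e).factorial))
          * ((i'+j+2)*(i'+j+3)*(i'+j+4)*(d+e+1)) := by
        exact Nat.mul_le_mul_right _ (Nat.mul_le_mul_right _ hV)
    _ = (i'+j+2)*(i'+j+3)*(i'+j+4)*(d+e+1)*(j+d+i'+e+1).factorial := by
        rw [← hkey]; ring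

lemma nat2 (j d : ℕ) :
    (j+4).factorial * (d+1).factorial ≤ (j+4)^3 * (j+d+1).factorial := by
  have hsymm : (j+d+1).choose (j+1) = (j+d+1).choose d := by
    have h := Nat.choose_symm (show j+1 ≤ j+d+1 by omega)
    rw [show j+d+1 - (j+1) = d by omega] at h
    exact h.symm
  have hcm : d+1 ≤ (j+d+1).choose (j+1) := by
    rw [hsymm]
    calc d+1 = (d+1).choose d := (Nat.choose_succ_self_right d).symm
      _ ≤ (j+d+1).choose d := Nat.choose_le_choose d (by omega)
  have hkey : (j+d+1).choose (j+1) * (j+1).factorial * d.factorial = (j+d+1).factorial := by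
    have h := Nat.choose_mul_factorial_mul_factorial (show j+1 ≤ j+d+1 by omega)
    rwa [show j+d+1 - (j+1) = d by omega] at h
  have h1 : (j+1).factorial * (d+1).factorial ≤ (j+d+1).factorial := by
    calc (j+1).factorial * (d+1).factorial = (d+1) * ((j+1).factorial * d.factorial) := by
          rw [Nat.factorial_succ d]; ring
      _ ≤ (j+d+1).choose (j+1) * ((j+1).factorial * d.factorial) := Nat.mul_le_mul_right _ hcm
      _ = (j+d+1).factorial := by rw [← hkey]; ring
  have e1 : (j+4).factorial = (j+4)*((j+3)*((j+2)*(j+1).factorial)) := by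
    rw [show j+4 = (j+1)+1+1+1 by omega]
    simp [Nat.factorial_succ]
  calc (j+4).factorial * (d+1).factorial
      = ((j+4)*(j+3)*(j+2)) * ((j+1).factorial * (d+1).factorial) := by rw [e1]; ring
    _ ≤ ((j+4)*(j+4)*(j+4)) * ((j+d+1).factorial) := by
        exact Nat.mul_le_mul (by nlinarith) h1
    _ = (j+4)^3 * (j+d+1).factorial := by ring

lemma core (ρ₀ ρ : ℝ) (hρ₀ : 0 < ρ₀) (hρ1 : (Real.exp 1)⁻¹ * ρ₀ ≤ ρ) (hρ2 : ρ ≤ ρ₀)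
    (i' j d e : ℕ) (hcond : i' + j + 1 ≤ d + e) :
    ((j+d).choose j : ℝ) * (((i'+e+1).choose (i'+1) : ℕ) : ℝ)
        * (Real.sqrt ((j:ℝ)+(d:ℝ)+(i':ℝ)+(e:ℝ)+1))⁻¹ * ((j:ℝ)+(d:ℝ)+1)
        * (Hc ρ (j+d+1) (i'+e) / (Hc ρ (j+4) i' * Hc ρ (d+1) e))
      ≤ (512 * (Real.exp 1)^5 / ρ₀^5) * ((j:ℝ)+4) * ((d:ℝ)+1)
        * ((((i':ℝ)+(j:ℝ)+2)^2)⁻¹ ) * Real.sqrt ((d:ℝ)+(e:ℝ)+1) := by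
  have hρ : 0 < ρ := lt_of_lt_of_le (by positivity) hρ1
  have hf0 : (0:ℝ) < ((j+d+1).factorial : ℝ) := by positivity
  have hfn : (0:ℝ) < ((j+d+i'+e+1).factorial : ℝ) := by positivity
  have hfF1 : (0:ℝ) < ((i'+j+4).factorial : ℝ) := by positivity
  have hfF2 : (0:ℝ) < ((d+e+1).factorial : ℝ) := by positivity
  have hs0 : 0 < Real.sqrt ((j+d+1).factorial : ℝ) := Real.sqrt_pos.mpr hf0
  have hs1 : 0 < Real.sqrt ((j+4).factorial : ℝ) := Real.sqrt_pos.mpr (by positivity)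
  have hs2 : 0 < Real.sqrt ((d+1).factorial : ℝ) := Real.sqrt_pos.mpr (by positivity)
  have hsn : 0 < Real.sqrt ((j:ℝ)+(d:ℝ)+(i':ℝ)+(e:ℝ)+1) := Real.sqrt_pos.mpr (by positivity)
  have hsde : 0 ≤ Real.sqrt ((d:ℝ)+(e:ℝ)+1) := Real.sqrt_nonneg _
  have hH0 : Hc ρ (j+d+1) (i'+e)
      = ρ^(j+d+i'+e+2) * ((j:ℝ)+(d:ℝ)+(i':ℝ)+(e:ℝ)+2)^9
        / (((j+d+i'+e+1).factorial : ℝ) * Real.sqrt ((j+d+1).factorial : ℝ)) := by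
    unfold Hc
    rw [show j+d+1+(i'+e) = j+d+i'+e+1 by omega, show j+d+i'+e+1+1 = j+d+i'+e+2 by omega,
      show ((j+d+1 : ℕ) : ℝ) + ((i'+e : ℕ) : ℝ) + 1 = (j:ℝ)+(d:ℝ)+(i':ℝ)+(e:ℝ)+2 by
        push_cast; ring]
  have hH1 : Hc ρ (j+4) i'
      = ρ^(i'+j+5) * ((i':ℝ)+(j:ℝ)+5)^9
        / (((i'+j+4).factorial : ℝ) * Real.sqrt ((j+4).factorial : ℝ)) := by
    unfold Hc
    rw [show j+4+i' = i'+j+4 by omega, show i'+j+4+1 = i'+j+5 by omega,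
      show ((j+4 : ℕ) : ℝ) + (i' : ℝ) + 1 = (i':ℝ)+(j:ℝ)+5 by push_cast; ring]
  have hH2 : Hc ρ (d+1) e
      = ρ^(d+e+2) * ((d:ℝ)+(e:ℝ)+2)^9
        / (((d+e+1).factorial : ℝ) * Real.sqrt ((d+1).factorial : ℝ)) := by
    unfold Hc
    rw [show d+1+e = d+e+1 by omega, show d+e+1+1 = d+e+2 by omega,
      show ((d+1 : ℕ) : ℝ) + (e : ℝ) + 1 = (d:ℝ)+(e:ℝ)+2 by push_cast; ring]
  -- component bounds (proved early, before any ^9 equations enter the context)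
  have hr1 : ((j+d).choose j : ℝ) * (((i'+e+1).choose (i'+1) : ℕ) : ℝ)
        * ((i'+j+4).factorial : ℝ) * ((d+e+1).factorial : ℝ)
      ≤ ((i':ℝ)+(j:ℝ)+2)*((i':ℝ)+(j:ℝ)+3)*((i':ℝ)+(j:ℝ)+4)*((d:ℝ)+(e:ℝ)+1)
          *((j+d+i'+e+1).factorial : ℝ) := by
    exact_mod_cast nat1 i' j d e
  have hr2 : Real.sqrt ((j+4).factorial : ℝ) * Real.sqrt ((d+1).factorial : ℝ)
      ≤ ((j:ℝ)+4) * (Real.sqrt ((j:ℝ)+4) * Real.sqrt ((j+d+1).factorial : ℝ)) := by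
    have hc : (((j+4).factorial : ℝ)) * ((d+1).factorial : ℝ)
        ≤ ((j:ℝ)+4)^3 * ((j+d+1).factorial : ℝ) := by exact_mod_cast nat2 j d
    calc Real.sqrt ((j+4).factorial : ℝ) * Real.sqrt ((d+1).factorial : ℝ)
        = Real.sqrt (((j+4).factorial : ℝ) * ((d+1).factorial : ℝ)) :=
          (Real.sqrt_mul (by positivity) _).symm
      _ ≤ Real.sqrt (((j:ℝ)+4)^3 * ((j+d+1).factorial : ℝ)) := Real.sqrt_le_sqrt hc
      _ = ((j:ℝ)+4) * (Real.sqrt ((j:ℝ)+4) * Real.sqrt ((j+d+1).factorial : ℝ)) := by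
          rw [show ((j:ℝ)+4)^3 * ((j+d+1).factorial : ℝ)
              = ((j:ℝ)+4)^2 * (((j:ℝ)+4) * ((j+d+1).factorial : ℝ)) by ring,
            Real.sqrt_mul (by positivity), Real.sqrt_sq (by positivity),
            Real.sqrt_mul (by positivity)]
  have hr6 : (j:ℝ)+(d:ℝ)+1 ≤ ((j:ℝ)+1)*((d:ℝ)+1) := by
    nlinarith [mul_nonneg (Nat.cast_nonneg j : (0:ℝ) ≤ j) (Nat.cast_nonneg d : (0:ℝ) ≤ d)]
  have hr3raw : ((i':ℝ)+(j:ℝ)+2)^2 * (((i':ℝ)+(j:ℝ)+2)*(((i':ℝ)+(j:ℝ)+3)*(((i':ℝ)+(j:ℝ)+4)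
        *(Real.sqrt ((j:ℝ)+4)*((j:ℝ)+1))))) ≤ ((i':ℝ)+(j:ℝ)+5)^9 := by
    have hx : (1:ℝ) ≤ (i':ℝ)+(j:ℝ)+5 := by
      have := Nat.cast_nonneg (α := ℝ) i'; have := Nat.cast_nonneg (α := ℝ) j; linarith
    have hsq : Real.sqrt ((j:ℝ)+4) ≤ (i':ℝ)+(j:ℝ)+5 := by
      rw [Real.sqrt_le_left (by positivity)]
      nlinarith [Nat.cast_nonneg (α := ℝ) i', Nat.cast_nonneg (α := ℝ) j,
        sq_nonneg ((i':ℝ)+(j:ℝ))]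
    have h0i : (0:ℝ) ≤ (i':ℝ) := Nat.cast_nonneg i'
    have h0j : (0:ℝ) ≤ (j:ℝ) := Nat.cast_nonneg j
    calc ((i':ℝ)+(j:ℝ)+2)^2 * (((i':ℝ)+(j:ℝ)+2)*(((i':ℝ)+(j:ℝ)+3)*(((i':ℝ)+(j:ℝ)+4)
          *(Real.sqrt ((j:ℝ)+4)*((j:ℝ)+1)))))
        ≤ ((i':ℝ)+(j:ℝ)+5)^2 * (((i':ℝ)+(j:ℝ)+5)*(((i':ℝ)+(j:ℝ)+5)*(((i':ℝ)+(j:ℝ)+5)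
          *(((i':ℝ)+(j:ℝ)+5)*((i':ℝ)+(j:ℝ)+5))))) := by
          gcongr <;> first | exact hsq | linarith
      _ = ((i':ℝ)+(j:ℝ)+5)^7 := by ring
      _ ≤ ((i':ℝ)+(j:ℝ)+5)^9 := pow_le_pow_right₀ hx (by norm_num)
  have hr4raw : ((j:ℝ)+(d:ℝ)+(i':ℝ)+(e:ℝ)+2)^9 ≤ 2^9 * ((d:ℝ)+(e:ℝ)+2)^9 := by
    have hc' : (i':ℝ)+(j:ℝ)+1 ≤ (d:ℝ)+(e:ℝ) := by exact_mod_cast hcond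
    calc ((j:ℝ)+(d:ℝ)+(i':ℝ)+(e:ℝ)+2)^9 ≤ (2*((d:ℝ)+(e:ℝ)+2))^9 :=
          pow_le_pow_left₀ (by positivity) (by linarith) 9
      _ = 2^9 * ((d:ℝ)+(e:ℝ)+2)^9 := mul_pow _ _ 9
  have hr5 : (d:ℝ)+(e:ℝ)+1
      ≤ Real.sqrt ((d:ℝ)+(e:ℝ)+1) * Real.sqrt ((j:ℝ)+(d:ℝ)+(i':ℝ)+(e:ℝ)+1) := by
    calc (d:ℝ)+(e:ℝ)+1 = Real.sqrt ((d:ℝ)+(e:ℝ)+1) * Real.sqrt ((d:ℝ)+(e:ℝ)+1) :=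
          (Real.mul_self_sqrt (by positivity)).symm
      _ ≤ Real.sqrt ((d:ℝ)+(e:ℝ)+1) * Real.sqrt ((j:ℝ)+(d:ℝ)+(i':ℝ)+(e:ℝ)+1) := by
          have h0i : (0:ℝ) ≤ (i':ℝ) := Nat.cast_nonneg i'
          have h0j : (0:ℝ) ≤ (j:ℝ) := Nat.cast_nonneg j
          exact mul_le_mul_of_nonneg_left (Real.sqrt_le_sqrt (by linarith)) hsde
  rw [hH0, hH1, hH2]
  have hpow : ρ^(j+d+i'+e+2) * ρ^5 = ρ^(i'+j+5) * ρ^(d+e+2) := by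
    rw [← pow_add, ← pow_add]; congr 1; omega
  set P0 := ρ^(j+d+i'+e+2) with hP0
  set P1 := ρ^(i'+j+5) with hP1
  set P2 := ρ^(d+e+2) with hP2
  have hP0pos : 0 < P0 := pow_pos hρ _
  have hP1pos : 0 < P1 := pow_pos hρ _
  have hP2pos : 0 < P2 := pow_pos hρ _
  clear_value P0 P1 P2
  set A := ((j:ℝ)+(d:ℝ)+(i':ℝ)+(e:ℝ)+2)^9 with hA
  set B := ((i':ℝ)+(j:ℝ)+5)^9 with hB
  set Cc := ((d:ℝ)+(e:ℝ)+2)^9 with hCc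
  clear_value A B Cc
  have hApos : 0 < A := by rw [hA]; positivity
  have hBpos : 0 < B := by rw [hB]; positivity
  have hCcpos : 0 < Cc := by rw [hCc]; positivity
  have hDEN : 0 < Real.sqrt ((j:ℝ)+(d:ℝ)+(i':ℝ)+(e:ℝ)+1) * (P1 * (P2 * (B * (Cc *
      (((j+d+i'+e+1).factorial : ℝ) * Real.sqrt ((j+d+1).factorial : ℝ)))))) :=
    mul_pos hsn (mul_pos hP1pos (mul_pos hP2pos (mul_pos hBpos (mul_pos hCcpos (mul_pos hfn hs0)))))
  have hDEN2 : 0 < ρ₀^5 * ((i':ℝ)+(j:ℝ)+2)^2 := by positivity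
  have hLHS' : ((j+d).choose j : ℝ) * (((i'+e+1).choose (i'+1) : ℕ) : ℝ)
        * (Real.sqrt ((j:ℝ)+(d:ℝ)+(i':ℝ)+(e:ℝ)+1))⁻¹ * ((j:ℝ)+(d:ℝ)+1)
        * ((P0 * A
            / (((j+d+i'+e+1).factorial : ℝ) * Real.sqrt ((j+d+1).factorial : ℝ)))
          / ((P1 * B / (((i'+j+4).factorial : ℝ) * Real.sqrt ((j+4).factorial : ℝ)))
            * (P2 * Cc / (((d+e+1).factorial : ℝ) * Real.sqrt ((d+1).factorial : ℝ)))))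
      = (((j+d).choose j : ℝ) * (((i'+e+1).choose (i'+1) : ℕ) : ℝ)
          * ((i'+j+4).factorial : ℝ) * ((d+e+1).factorial : ℝ)
          * (Real.sqrt ((j+4).factorial : ℝ) * Real.sqrt ((d+1).factorial : ℝ))
          * ((j:ℝ)+(d:ℝ)+1) * (P0 * A))
        / (Real.sqrt ((j:ℝ)+(d:ℝ)+(i':ℝ)+(e:ℝ)+1) * (P1 * (P2 * (B * (Cc *
            (((j+d+i'+e+1).factorial : ℝ) * Real.sqrt ((j+d+1).factorial : ℝ))))))) := by
    field_simp
  have hRHS' : (512 * (Real.exp 1)^5 / ρ₀^5) * ((j:ℝ)+4) * ((d:ℝ)+1)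
        * ((((i':ℝ)+(j:ℝ)+2)^2)⁻¹ ) * Real.sqrt ((d:ℝ)+(e:ℝ)+1)
      = (512 * (Real.exp 1)^5 * ((j:ℝ)+4) * ((d:ℝ)+1) * Real.sqrt ((d:ℝ)+(e:ℝ)+1))
        / (ρ₀^5 * ((i':ℝ)+(j:ℝ)+2)^2) := by
    field_simp
  rw [hLHS', hRHS', div_le_div_iff₀ hDEN hDEN2]
  have hρ5 : P0 * ρ₀^5 ≤ (Real.exp 1)^5 * (P1 * P2) := by
    have hexp : (0:ℝ) < Real.exp 1 := Real.exp_pos 1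
    have h' : ρ₀ ≤ Real.exp 1 * ρ := by
      rw [inv_mul_le_iff₀ hexp] at hρ1; exact hρ1
    have h5 : ρ₀^5 ≤ (Real.exp 1)^5 * ρ^5 := by
      calc ρ₀^5 ≤ (Real.exp 1 * ρ)^5 := pow_le_pow_left₀ hρ₀.le h' 5
        _ = (Real.exp 1)^5 * ρ^5 := mul_pow _ _ 5
    calc P0 * ρ₀^5 ≤ P0 * ((Real.exp 1)^5 * ρ^5) :=
          mul_le_mul_of_nonneg_left h5 hP0pos.le
      _ = (Real.exp 1)^5 * (P0 * ρ^5) := by ring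
      _ = (Real.exp 1)^5 * (P1 * P2) := by rw [hpow]
  -- assemble
  calc (((j+d).choose j : ℝ) * (((i'+e+1).choose (i'+1) : ℕ) : ℝ)
          * ((i'+j+4).factorial : ℝ) * ((d+e+1).factorial : ℝ)
          * (Real.sqrt ((j+4).factorial : ℝ) * Real.sqrt ((d+1).factorial : ℝ))
          * ((j:ℝ)+(d:ℝ)+1) * (P0 * A)) * (ρ₀^5 * ((i':ℝ)+(j:ℝ)+2)^2)
      = (((j+d).choose j : ℝ) * (((i'+e+1).choose (i'+1) : ℕ) : ℝ)
          * ((i'+j+4).factorial : ℝ) * ((d+e+1).factorial : ℝ))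
        * (Real.sqrt ((j+4).factorial : ℝ) * Real.sqrt ((d+1).factorial : ℝ))
        * ((j:ℝ)+(d:ℝ)+1) * A * (P0 * ρ₀^5) * (((i':ℝ)+(j:ℝ)+2)^2) := by ring
    _ ≤ (((i':ℝ)+(j:ℝ)+2)*((i':ℝ)+(j:ℝ)+3)*((i':ℝ)+(j:ℝ)+4)*((d:ℝ)+(e:ℝ)+1)
          *((j+d+i'+e+1).factorial : ℝ))
        * (((j:ℝ)+4) * (Real.sqrt ((j:ℝ)+4) * Real.sqrt ((j+d+1).factorial : ℝ)))
        * (((j:ℝ)+1)*((d:ℝ)+1)) * (2^9 * Cc) * ((Real.exp 1)^5 * (P1 * P2))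
        * (((i':ℝ)+(j:ℝ)+2)^2) := by
        gcongr <;> positivity
    _ = (((i':ℝ)+(j:ℝ)+2)^2 * (((i':ℝ)+(j:ℝ)+2)*(((i':ℝ)+(j:ℝ)+3)*(((i':ℝ)+(j:ℝ)+4)
          *(Real.sqrt ((j:ℝ)+4)*((j:ℝ)+1)))))) * ((d:ℝ)+(e:ℝ)+1)
        * (((j+d+i'+e+1).factorial : ℝ) * ((j:ℝ)+4) * Real.sqrt ((j+d+1).factorial : ℝ)
            * ((d:ℝ)+1) * (2^9 * Cc) * ((Real.exp 1)^5 * (P1 * P2))) := by ring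
    _ ≤ B * (Real.sqrt ((d:ℝ)+(e:ℝ)+1) * Real.sqrt ((j:ℝ)+(d:ℝ)+(i':ℝ)+(e:ℝ)+1))
        * (((j+d+i'+e+1).factorial : ℝ) * ((j:ℝ)+4) * Real.sqrt ((j+d+1).factorial : ℝ)
            * ((d:ℝ)+1) * (2^9 * Cc) * ((Real.exp 1)^5 * (P1 * P2))) := by
        gcongr <;> positivity
    _ = (512 * (Real.exp 1)^5 * ((j:ℝ)+4) * ((d:ℝ)+1) * Real.sqrt ((d:ℝ)+(e:ℝ)+1))
        * (Real.sqrt ((j:ℝ)+(d:ℝ)+(i':ℝ)+(e:ℝ)+1) * (P1 * (P2 * (B * (Cc *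
            (((j+d+i'+e+1).factorial : ℝ) * Real.sqrt ((j+d+1).factorial : ℝ))))))) := by
        norm_num; ring

/-- estimate (4.22): for `i ≥ 1`, `i ≤ k+1`, `j ≤ m`,
`1 ≤ i+j ≤ ⌊(m+k+1)/2⌋`,
`C(m,j)C(k+1,i)(m+k+1)^{-1/2}(m+1)H_{ρ,m+1,k}/(H_{ρ,j+4,i−1}H_{ρ,m−j+1,k+1−i})
  ≤ C(j+4)(m−j+1)(i+j+1)^{-2}(m+k−i−j+2)^{1/2}`. -/
theorem weight_estimate_fe10 (ρ₀ : ℝ) (hρ₀ : 0 < ρ₀) :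
    ∃ C : ℝ, 0 < C ∧
      ∀ ρ : ℝ, (Real.exp 1)⁻¹ * ρ₀ ≤ ρ → ρ ≤ ρ₀ →
        ∀ m k i j : ℕ, 1 ≤ i → i ≤ k + 1 → j ≤ m → 1 ≤ i + j → i + j ≤ (m + k + 1) / 2 →
          (m.choose j : ℝ) * ((k + 1).choose i : ℝ)
              * (Real.sqrt ((m : ℝ) + (k : ℝ) + 1))⁻¹ * ((m : ℝ) + 1)
              * (Hc ρ (m + 1) k / (Hc ρ (j + 4) (i - 1) * Hc ρ (m - j + 1) (k + 1 - i)))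
            ≤ C * ((j : ℝ) + 4) * ((m : ℝ) - (j : ℝ) + 1) * (((i : ℝ) + (j : ℝ) + 1) ^ 2)⁻¹
                * Real.sqrt ((m : ℝ) + (k : ℝ) - (i : ℝ) - (j : ℝ) + 2) := by

  refine ⟨512 * (Real.exp 1)^5 / ρ₀^5, by positivity, ?_⟩
  intro ρ hρ1 hρ2 m k i j hi1 hik hjm hij1 hij2
  obtain ⟨i', rfl⟩ : ∃ i'', i = i'' + 1 := ⟨i-1, by omega⟩
  obtain ⟨d, rfl⟩ : ∃ d, m = j + d := ⟨m - j, by omega⟩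
  obtain ⟨e, rfl⟩ : ∃ e, k = i' + e := ⟨k - i', by omega⟩
  have hcond : i' + j + 1 ≤ d + e := by omega
  have H := core ρ₀ ρ hρ₀ hρ1 hρ2 i' j d e hcond
  rw [show i'+1-1 = i' by omega, show j+d-j = d by omega,
    show i'+e+1-(i'+1) = e by omega,
    show ((j+d : ℕ) : ℝ) + ((i'+e : ℕ) : ℝ) + 1 = (j:ℝ)+(d:ℝ)+(i':ℝ)+(e:ℝ)+1 by
      push_cast; ring,
    show ((j+d : ℕ) : ℝ) + ((i'+e : ℕ) : ℝ) - ((i'+1 : ℕ) : ℝ) - (j : ℝ) + 2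
        = (d:ℝ)+(e:ℝ)+1 by push_cast; ring,
    show ((j+d : ℕ) : ℝ) + 1 = (j:ℝ)+(d:ℝ)+1 by push_cast; ring,
    show ((j+d : ℕ) : ℝ) - (j : ℝ) + 1 = (d:ℝ)+1 by push_cast; ring,
    show ((i'+1 : ℕ) : ℝ) + (j : ℝ) + 1 = (i':ℝ)+(j:ℝ)+2 by push_cast; ring]
  exact H
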